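/- arXiv:2511.18605 — 3 statements merged into one kernel-verified Lean document; each statement's English description precedes it below -/
import Mathlib

section
/- Let M be an n×n positive semidefinite Hermitian matrix and β ≥ 0. Then det(M + β·I_n) ≥ Σ_{k=0}^{n} β^k (det M)^{(n-k)/n}. -/
open scoped BigOperators ComplexOrder

open Finset in
private lemma geom_mean_superadd {n : ℕ} (hn : 0 < n) (β : ℝ) (hβ : 0 < β)
    (l : Fin n → ℝ) (hl : ∀ i, 0 ≤ l i) :
    (∏ i, l i) ^ ((n : ℝ)⁻¹) + β ≤ (∏ i, (l i + β)) ^ ((n : ℝ)⁻¹) := by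
  have hn' : (n : ℝ) ≠ 0 := Nat.cast_ne_zero.mpr hn.ne'
  have hs : ∀ i, 0 < l i + β := fun i => add_pos_of_nonneg_of_pos (hl i) hβ
  have hw : ∀ i ∈ (univ : Finset (Fin n)), (0:ℝ) ≤ (n:ℝ)⁻¹ := fun _ _ => by positivity
  have hw' : ∑ _i : Fin n, ((n:ℝ)⁻¹) = 1 := by
    rw [Finset.sum_const, card_univ, Fintype.card_fin, nsmul_eq_mul, mul_inv_cancel₀ hn']
  have h1 := Real.geom_mean_le_arith_mean_weighted univ (fun _ => (n:ℝ)⁻¹)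
      (fun i => l i / (l i + β)) hw hw' (fun i _ => div_nonneg (hl i) (hs i).le)
  have h2 := Real.geom_mean_le_arith_mean_weighted univ (fun _ => (n:ℝ)⁻¹)
      (fun i => β / (l i + β)) hw hw' (fun i _ => div_nonneg hβ.le (hs i).le)
  have hP : (0:ℝ) < ∏ i, (l i + β) := Finset.prod_pos fun i _ => hs i
  have hPr : (0:ℝ) < (∏ i, (l i + β)) ^ ((n : ℝ)⁻¹) := Real.rpow_pos_of_pos hP _
  have e1 : (∏ i, (l i / (l i + β)) ^ ((n:ℝ)⁻¹))
      = (∏ i, l i) ^ ((n:ℝ)⁻¹) / (∏ i, (l i + β)) ^ ((n:ℝ)⁻¹) := by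
    rw [Real.finset_prod_rpow _ _ (fun i _ => div_nonneg (hl i) (hs i).le),
      Finset.prod_div_distrib, Real.div_rpow (Finset.prod_nonneg fun i _ => hl i) hP.le]
  have e2 : (∏ i : Fin n, (β / (l i + β)) ^ ((n:ℝ)⁻¹))
      = β / (∏ i, (l i + β)) ^ ((n:ℝ)⁻¹) := by
    rw [Real.finset_prod_rpow _ _ (fun i _ => div_nonneg hβ.le (hs i).le),
      Finset.prod_div_distrib, Real.div_rpow (by positivity) hP.le,
      Finset.prod_const, card_univ, Fintype.card_fin, ← Real.rpow_natCast β n,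
      ← Real.rpow_mul hβ.le, mul_inv_cancel₀ hn', Real.rpow_one]
  have hsum : (∑ i, ((n:ℝ)⁻¹ * (l i / (l i + β)))) + ∑ i, ((n:ℝ)⁻¹ * (β / (l i + β))) = 1 := by
    rw [← Finset.sum_add_distrib, ← hw']
    refine Finset.sum_congr rfl fun i _ => ?_
    rw [← mul_add, ← add_div, div_self (hs i).ne', mul_one]
  rw [e1] at h1
  rw [e2] at h2
  have := add_le_add h1 h2
  rw [hsum, ← add_div, div_le_one hPr] at this
  exact this

open Finset in
private lemma real_key {n : ℕ} (hn : 0 < n) (β : ℝ) (hβ : 0 ≤ β)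
    (l : Fin n → ℝ) (hl : ∀ i, 0 ≤ l i) :
    ∑ k ∈ Finset.range (n + 1),
      β ^ k * (∏ i, l i) ^ (((n : ℝ) - (k : ℝ)) / (n : ℝ)) ≤ ∏ i, (l i + β) := by
  have hn' : (n : ℝ) ≠ 0 := Nat.cast_ne_zero.mpr hn.ne'
  have hd : (0:ℝ) ≤ ∏ i, l i := Finset.prod_nonneg fun i _ => hl i
  rcases eq_or_lt_of_le hβ with rfl | hβ'
  · -- β = 0
    rw [Finset.sum_eq_single 0]
    · simp only [pow_zero, Nat.cast_zero, sub_zero, one_mul, div_self hn', Real.rpow_one]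
      simp
    · intro k _ hk
      rw [zero_pow hk, zero_mul]
    · intro h; exact absurd (Finset.mem_range.mpr (Nat.succ_pos n)) h
  · -- β > 0
    set x : ℝ := (∏ i, l i) ^ ((n : ℝ)⁻¹) with hx
    have hx0 : 0 ≤ x := Real.rpow_nonneg hd _
    have key := geom_mean_superadd hn β hβ' l hl
    have hstep : (x + β) ^ n ≤ ∏ i, (l i + β) := by
      calc (x + β) ^ n ≤ ((∏ i, (l i + β)) ^ ((n : ℝ)⁻¹)) ^ n :=
            pow_le_pow_left₀ (by positivity) key n
        _ = ∏ i, (l i + β) := by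
            rw [← Real.rpow_natCast ((∏ i, (l i + β)) ^ ((n : ℝ)⁻¹)) n,
              ← Real.rpow_mul (Finset.prod_nonneg fun i _ => le_trans (hl i) (by linarith)),
              inv_mul_cancel₀ hn', Real.rpow_one]
    refine le_trans ?_ hstep
    have hterm : ∀ k ∈ Finset.range (n+1),
        β ^ k * (∏ i, l i) ^ (((n : ℝ) - (k : ℝ)) / (n : ℝ)) = β ^ k * x ^ (n - k) := by
      intro k hk
      have hkn : k ≤ n := Nat.lt_succ_iff.mp (Finset.mem_range.mp hk)
      congr 1
      have : ((n : ℝ) - (k : ℝ)) / (n : ℝ) = (n - k : ℕ) * (n : ℝ)⁻¹ := by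
        rw [Nat.cast_sub hkn]; ring
      rw [this, mul_comm, Real.rpow_mul hd, Real.rpow_natCast]
    rw [Finset.sum_congr rfl hterm]
    rw [add_pow]
    rw [← Finset.sum_range_reflect]
    refine Finset.sum_le_sum fun k hk => ?_
    have hkn : k ≤ n := Nat.lt_succ_iff.mp (Finset.mem_range.mp hk)
    have h1 : n + 1 - 1 - k = n - k := by omega
    have h2 : n - (n - k) = k := by omega
    rw [h1, h2]
    have hchoose : (1:ℝ) ≤ (n.choose k : ℝ) := by
      exact_mod_cast Nat.one_le_iff_ne_zero.mpr (Nat.choose_pos hkn).ne'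
    calc β ^ (n - k) * x ^ k = x ^ k * β ^ (n - k) := by ring
      _ ≤ x ^ k * β ^ (n - k) * (n.choose k : ℝ) := by
          nlinarith [mul_nonneg (pow_nonneg hx0 k) (pow_nonneg hβ (n - k))]

/-- **Lemma (Ha–Khanh).** If `M` is an `n × n` positive semidefinite Hermitian matrix and
`β ≥ 0`, then `det (M + β • I) ≥ ∑_{k=0}^{n} β^k (det M)^{(n-k)/n}`. The determinants of
positive semidefinite Hermitian matrices are nonnegative reals; we state the inequality for
their real parts. -/
theorem det_add_smul_one_ge_sum (n : ℕ) (hn : 0 < n) (M : Matrix (Fin n) (Fin n) ℂ)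
    (hM : M.PosSemidef) (β : ℝ) (hβ : 0 ≤ β) :
    ∑ k ∈ Finset.range (n + 1),
      β ^ k * (M.det.re) ^ (((n : ℝ) - (k : ℝ)) / (n : ℝ)) ≤ (M + β • 1).det.re := by
  have hHerm := hM.isHermitian
  set l := hHerm.eigenvalues with hl
  have hlnn : ∀ i, 0 ≤ l i := hM.eigenvalues_nonneg
  -- det M = ∏ eigenvalues
  have hdet : M.det.re = ∏ i, l i := by
    rw [hHerm.det_eq_prod_eigenvalues]
    norm_cast
  -- det (M + β • 1) = ∏ (eigenvalue + β)
  set U : Matrix (Fin n) (Fin n) ℂ := (hHerm.eigenvectorUnitary : Matrix (Fin n) (Fin n) ℂ) with hUdef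
  have hU : U * star U = 1 := Matrix.mem_unitaryGroup_iff.mp hHerm.eigenvectorUnitary.2
  have hsmul : β • (1 : Matrix (Fin n) (Fin n) ℂ)
      = Matrix.diagonal (fun _ => (β : ℂ)) := by
    ext i j
    by_cases h : i = j <;>
      simp [Matrix.one_apply, Matrix.diagonal, h, Complex.real_smul]
  have hkey : M + β • 1
      = U * Matrix.diagonal (fun i => (l i : ℂ) + β) * star U := by
    have hD : Matrix.diagonal (fun i => (l i : ℂ) + β)
        = Matrix.diagonal (RCLike.ofReal ∘ l) + Matrix.diagonal (fun _ => (β : ℂ)) := by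
      rw [Matrix.diagonal_add]
      congr 1
    rw [hD, Matrix.mul_add, Matrix.add_mul, ← hsmul]
    congr 1
    · exact hHerm.spectral_theorem
    · rw [Matrix.mul_smul, Matrix.mul_one, Matrix.smul_mul, hU]
  have hdet2 : (M + β • 1).det.re = ∏ i, (l i + β) := by
    rw [hkey, Matrix.det_mul, Matrix.det_mul, mul_comm (U.det),
      mul_assoc, ← Matrix.det_mul, hU, Matrix.det_one, mul_one, Matrix.det_diagonal]
    have : (∏ i, ((l i : ℂ) + β)) = ((∏ i, (l i + β) : ℝ) : ℂ) := by
      rw [Complex.ofReal_prod]; push_cast; rfl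
    rw [this, Complex.ofReal_re]
  rw [hdet, hdet2]
  exact real_key hn β hβ l hlnn
end

section
/- Let Ω ⊆ ℂ^n be a bounded domain, ψ a C^{1,1}-smooth real-valued function on a neighborhood of cl(Ω), and ρ a continuous plurisubharmonic function on Ω extending continuously to cl(Ω) such that ρ(z) − ‖z‖² is plurisubharmonic on Ω. Then there exists K > 0 such that ψ + Kρ is plurisubharmonic on Ω and continuous on cl(Ω). -/
open scoped BigOperators

noncomputable section

/-- A function `u` is plurisubharmonic on `Ω ⊆ ℂⁿ` if it is upper semicontinuous on `Ω`
and satisfies the sub-mean value inequality over circles on every complex line whose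
corresponding closed disc lies in `Ω`. -/
def PSH {n : ℕ} (Ω : Set (EuclideanSpace ℂ (Fin n))) (u : EuclideanSpace ℂ (Fin n) → ℝ) :
    Prop :=
  UpperSemicontinuousOn u Ω ∧
    ∀ (a b : EuclideanSpace ℂ (Fin n)) (r : ℝ), 0 < r →
      (∀ t : ℂ, ‖t‖ ≤ r → a + t • b ∈ Ω) →
      u a ≤ (2 * Real.pi)⁻¹ *
        ∫ θ in (0 : ℝ)..(2 * Real.pi), u (a + ((r : ℂ) * Complex.exp (θ * Complex.I)) • b)



lemma trig_int (x y : ℝ) :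
    ∫ θ in (0:ℝ)..(2*Real.pi), (x * Real.cos θ + y * Real.sin θ) = 0 := by
  rw [intervalIntegral.integral_add
      (Continuous.intervalIntegrable (by fun_prop : Continuous fun θ : ℝ => x * Real.cos θ) _ _)
      (Continuous.intervalIntegrable (by fun_prop : Continuous fun θ : ℝ => y * Real.sin θ) _ _),
    intervalIntegral.integral_const_mul, intervalIntegral.integral_const_mul,
    integral_cos, integral_sin]
  simp

lemma smul_decomp {n : ℕ} (r θ : ℝ) (b : EuclideanSpace ℂ (Fin n)) :
    ((r:ℂ) * Complex.exp (θ * Complex.I)) • b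
      = (r * Real.cos θ) • b + (r * Real.sin θ) • (Complex.I • b) := by
  have h : (r:ℂ) * Complex.exp (θ * Complex.I)
      = ((r * Real.cos θ : ℝ):ℂ) + ((r * Real.sin θ : ℝ):ℂ) * Complex.I := by
    rw [Complex.exp_mul_I]
    push_cast [← Complex.ofReal_cos, ← Complex.ofReal_sin]
    ring
  rw [h, add_smul, mul_smul, Complex.coe_smul, Complex.coe_smul]

lemma abs_c (r θ : ℝ) (hr : 0 < r) :
    ‖(r:ℂ) * Complex.exp (θ * Complex.I)‖ = r := by
  simp [Complex.norm_exp, abs_of_pos hr]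

lemma cont_c {n : ℕ} (r : ℝ) (b : EuclideanSpace ℂ (Fin n)) :
    Continuous fun θ : ℝ => ((r:ℂ) * Complex.exp (θ * Complex.I)) • b := by
  fun_prop

lemma int_lin {n : ℕ} (D : EuclideanSpace ℂ (Fin n) →L[ℝ] ℝ)
    (b : EuclideanSpace ℂ (Fin n)) (r : ℝ) :
    ∫ θ in (0:ℝ)..(2*Real.pi), D (((r:ℂ) * Complex.exp (θ * Complex.I)) • b) = 0 := by
  have h : ∀ θ : ℝ, D (((r:ℂ) * Complex.exp (θ * Complex.I)) • b)
      = (r * D b) * Real.cos θ + (r * D (Complex.I • b)) * Real.sin θ := by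
    intro θ
    rw [smul_decomp, map_add, map_smul, map_smul, smul_eq_mul, smul_eq_mul]
    ring
  simp only [h]
  exact trig_int _ _

lemma int_norm {n : ℕ} (a b : EuclideanSpace ℂ (Fin n)) (r : ℝ) (hr : 0 < r) :
    ∫ θ in (0:ℝ)..(2*Real.pi), ‖a + ((r:ℂ) * Complex.exp (θ * Complex.I)) • b‖^2
      = 2 * Real.pi * (‖a‖^2 + r^2 * ‖b‖^2) := by
  have h : ∀ θ : ℝ, ‖a + ((r:ℂ) * Complex.exp (θ * Complex.I)) • b‖^2
      = (‖a‖^2 + r^2 * ‖b‖^2)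
        + 2 * (innerSL ℝ a) (((r:ℂ) * Complex.exp (θ * Complex.I)) • b) := by
    intro θ
    rw [norm_add_sq_real]
    have : ‖((r:ℂ) * Complex.exp (θ * Complex.I)) • b‖^2 = r^2 * ‖b‖^2 := by
      rw [norm_smul, abs_c r θ hr, mul_pow]
    rw [this, innerSL_apply_apply]
    ring
  simp only [h]
  rw [intervalIntegral.integral_add (intervalIntegrable_const)
      ((by fun_prop : Continuous fun θ : ℝ => 2 * (innerSL ℝ a) (((r:ℂ) * Complex.exp (θ * Complex.I)) • b)).intervalIntegrable _ _),
    intervalIntegral.integral_const, intervalIntegral.integral_const_mul,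
    int_lin (innerSL ℝ a) b r]
  simp [smul_eq_mul]


lemma taylor_bound {n : ℕ} (Ω V : Set (EuclideanSpace ℂ (Fin n))) (hVopen : IsOpen V)
    (hΩV : Ω ⊆ V)
    (ψ : EuclideanSpace ℂ (Fin n) → ℝ) (hψ : ContDiffOn ℝ 1 ψ V) (L : NNReal)
    (hψlip : LipschitzOnWith L (fun z => fderivWithin ℝ ψ V z) V)
    (a b : EuclideanSpace ℂ (Fin n)) (r : ℝ) (hr : 0 < r)
    (hmem : ∀ t : ℂ, ‖t‖ ≤ r → a + t • b ∈ Ω)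
    (t : ℂ) (ht : ‖t‖ ≤ r) :
    ψ a + (fderivWithin ℝ ψ V a) (t • b) - (L:ℝ) * (r^2 * ‖b‖^2) ≤ ψ (a + t • b) := by
  set D := fderivWithin ℝ ψ V a with hD
  set g : EuclideanSpace ℂ (Fin n) → ℝ := fun z => ψ z - D z with hg
  set s : Set (EuclideanSpace ℂ (Fin n)) := segment ℝ a (a + t • b) with hs
  have hsΩ : s ⊆ Ω := by
    intro x hx
    rw [hs, segment_eq_image'] at hx
    obtain ⟨u, hu, rfl⟩ := hx
    simp only [add_sub_cancel_left]
    show a + u • (t • b) ∈ Ω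
    rw [← Complex.coe_smul, smul_smul]
    apply hmem
    rw [norm_mul, Complex.norm_of_nonneg hu.1]
    calc u * ‖t‖ ≤ 1 * r := by
          apply mul_le_mul hu.2 ht (norm_nonneg t) zero_le_one
      _ = r := one_mul r
  have hsV : s ⊆ V := hsΩ.trans hΩV
  have haΩ : a ∈ Ω := by simpa using hmem 0 (by simpa using hr.le)
  have haV : a ∈ V := hΩV haΩ
  have hdist : ∀ x ∈ s, ‖x - a‖ ≤ r * ‖b‖ := by
    intro x hx
    rw [hs, segment_eq_image'] at hx
    obtain ⟨u, hu, rfl⟩ := hx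
    simp only [add_sub_cancel_left]
    show ‖u • (t • b)‖ ≤ r * ‖b‖
    rw [norm_smul, norm_smul,
      Real.norm_eq_abs, abs_of_nonneg hu.1]
    calc u * (‖t‖ * ‖b‖) ≤ 1 * (r * ‖b‖) := by
          apply mul_le_mul hu.2 (mul_le_mul_of_nonneg_right ht (norm_nonneg b))
            (by positivity) zero_le_one
      _ = r * ‖b‖ := one_mul _
  have key : ‖g (a + t • b) - g a‖ ≤ ((L:ℝ) * (r * ‖b‖)) * ‖(a + t • b) - a‖ := by
    apply Convex.norm_image_sub_le_of_norm_hasFDerivWithin_le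
      (f' := fun x => fderiv ℝ ψ x - D) (s := s)
    · intro x hx
      have hxV : x ∈ V := hsV hx
      have hd : DifferentiableAt ℝ ψ x :=
        ((hψ.differentiableOn one_ne_zero) x hxV).differentiableAt (hVopen.mem_nhds hxV)
      exact ((hd.hasFDerivAt.sub D.hasFDerivAt)).hasFDerivWithinAt
    · intro x hx
      have hxV : x ∈ V := hsV hx
      have h1 : fderiv ℝ ψ x = fderivWithin ℝ ψ V x := (fderivWithin_of_isOpen hVopen hxV).symm
      rw [h1, hD]
      have h2 := hψlip.dist_le_mul x hxV a haV
      rw [dist_eq_norm, dist_eq_norm] at h2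
      calc ‖fderivWithin ℝ ψ V x - fderivWithin ℝ ψ V a‖ ≤ (L:ℝ) * ‖x - a‖ := h2
        _ ≤ (L:ℝ) * (r * ‖b‖) := by
            apply mul_le_mul_of_nonneg_left (hdist x hx) L.coe_nonneg
    · exact convex_segment _ _
    · exact left_mem_segment ℝ a (a + t • b)
    · exact right_mem_segment ℝ a (a + t • b)
  have hgd : g (a + t • b) - g a = ψ (a + t • b) - ψ a - D (t • b) := by
    simp only [hg]
    have : D (a + t • b) = D a + D (t • b) := by rw [map_add]
    rw [this]; ring
  have hnorm : ‖(a + t • b) - a‖ ≤ r * ‖b‖ :=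
    hdist _ (right_mem_segment ℝ a (a + t • b))
  have : |ψ (a + t • b) - ψ a - D (t • b)| ≤ (L:ℝ) * (r ^ 2 * ‖b‖ ^ 2) := by
    rw [← hgd, ← Real.norm_eq_abs]
    calc ‖g (a + t • b) - g a‖ ≤ ((L:ℝ) * (r * ‖b‖)) * ‖(a + t • b) - a‖ := key
      _ ≤ ((L:ℝ) * (r * ‖b‖)) * (r * ‖b‖) := by
          apply mul_le_mul_of_nonneg_left hnorm (by positivity)
      _ = (L:ℝ) * (r ^ 2 * ‖b‖ ^ 2) := by ring
  have := abs_le.1 this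
  linarith [this.1]

/-- **Lemma 3.2.** Let `Ω ⊆ ℂⁿ` be a bounded domain, `ψ` a `C^{1,1}`-smooth real-valued
function on an open neighbourhood `V` of `cl Ω` (i.e. `C¹` with Lipschitz derivative),
and `ρ` a continuous plurisubharmonic function on `Ω`, continuous on `cl Ω`, with
`ρ(z) - ‖z‖²` plurisubharmonic on `Ω`. Then for sufficiently large `K > 0`, the function
`ψ + K ρ` is plurisubharmonic on `Ω` and continuous on `cl Ω`. -/
theorem psh_of_C11_plus_K_rho {n : ℕ} (Ω : Set (EuclideanSpace ℂ (Fin n)))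
    (hΩopen : IsOpen Ω) (hΩconn : IsConnected Ω) (hΩbdd : Bornology.IsBounded Ω)
    (V : Set (EuclideanSpace ℂ (Fin n))) (hVopen : IsOpen V) (hV : closure Ω ⊆ V)
    (ψ : EuclideanSpace ℂ (Fin n) → ℝ)
    (hψ : ContDiffOn ℝ 1 ψ V)
    (L : NNReal) (hψlip : LipschitzOnWith L (fun z => fderivWithin ℝ ψ V z) V)
    (ρ : EuclideanSpace ℂ (Fin n) → ℝ)
    (hρpsh : PSH Ω ρ) (hρcont : ContinuousOn ρ (closure Ω))
    (hρsq : PSH Ω (fun z => ρ z - ‖z‖ ^ 2)) :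
    ∃ K > (0 : ℝ), PSH Ω (fun z => ψ z + K * ρ z) ∧
      ContinuousOn (fun z => ψ z + K * ρ z) (closure Ω) := by
  set K : ℝ := (L:ℝ) + 1 with hK
  have hKpos : (0:ℝ) < K := by positivity
  have hKL : (L:ℝ) ≤ K := by simp [hK]
  have hcontcl : ContinuousOn (fun z => ψ z + K * ρ z) (closure Ω) :=
    (hψ.continuousOn.mono hV).add (continuousOn_const.mul hρcont)
  have hΩV : Ω ⊆ V := subset_closure.trans hV
  have hpi : (0:ℝ) < 2 * Real.pi := by positivity
  refine ⟨K, hKpos, ⟨(hcontcl.mono subset_closure).upperSemicontinuousOn, ?_⟩, hcontcl⟩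
  intro a b r hr hmem
  set p : ℝ → EuclideanSpace ℂ (Fin n) :=
    fun θ => a + ((r:ℂ) * Complex.exp (θ * Complex.I)) • b with hp
  have hmemΩ : ∀ θ, p θ ∈ Ω := fun θ => hmem _ (le_of_eq (abs_c r θ hr))
  have hpcont : Continuous p := continuous_const.add (cont_c r b)
  have contψ : Continuous fun θ => ψ (p θ) :=
    (hψ.continuousOn).comp_continuous hpcont fun θ => hΩV (hmemΩ θ)
  have contρ : Continuous fun θ => ρ (p θ) :=
    hρcont.comp_continuous hpcont fun θ => subset_closure (hmemΩ θ)
  have contnorm : Continuous fun θ => ‖p θ‖ ^ 2 := (hpcont.norm.pow 2)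
  have iψ : IntervalIntegrable (fun θ => ψ (p θ)) MeasureTheory.volume 0 (2*Real.pi) :=
    contψ.intervalIntegrable _ _
  have iρ : IntervalIntegrable (fun θ => ρ (p θ)) MeasureTheory.volume 0 (2*Real.pi) :=
    contρ.intervalIntegrable _ _
  have inorm : IntervalIntegrable (fun θ => ‖p θ‖ ^ 2) MeasureTheory.volume 0 (2*Real.pi) :=
    contnorm.intervalIntegrable _ _
  set D := fderivWithin ℝ ψ V a with hD
  -- Step 1 : lower bound for the ψ-integral
  have hstep1 : ψ a - (L:ℝ) * (r^2 * ‖b‖^2) ≤ (2*Real.pi)⁻¹ * ∫ θ in (0:ℝ)..(2*Real.pi), ψ (p θ) := by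
    have hpt : ∀ θ ∈ Set.Icc (0:ℝ) (2*Real.pi),
        ψ a + D (((r:ℂ) * Complex.exp (θ * Complex.I)) • b) - (L:ℝ) * (r^2 * ‖b‖^2) ≤ ψ (p θ) := by
      intro θ _
      exact taylor_bound Ω V hVopen hΩV ψ hψ L hψlip a b r hr hmem _ (le_of_eq (abs_c r θ hr))
    have ilow : IntervalIntegrable
        (fun θ => ψ a + D (((r:ℂ) * Complex.exp (θ * Complex.I)) • b) - (L:ℝ) * (r^2 * ‖b‖^2))
        MeasureTheory.volume 0 (2*Real.pi) := by
      apply Continuous.intervalIntegrable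
      fun_prop
    have hmono := intervalIntegral.integral_mono_on hpi.le ilow iψ hpt
    have hlow : (∫ θ in (0:ℝ)..(2*Real.pi),
        (ψ a + D (((r:ℂ) * Complex.exp (θ * Complex.I)) • b) - (L:ℝ) * (r^2 * ‖b‖^2)))
        = (2*Real.pi) * (ψ a - (L:ℝ) * (r^2 * ‖b‖^2)) := by
      have : ∀ θ : ℝ, ψ a + D (((r:ℂ) * Complex.exp (θ * Complex.I)) • b) - (L:ℝ) * (r^2 * ‖b‖^2)
          = (ψ a - (L:ℝ) * (r^2 * ‖b‖^2)) + D (((r:ℂ) * Complex.exp (θ * Complex.I)) • b) := by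
        intro θ; ring
      simp only [this]
      rw [intervalIntegral.integral_add intervalIntegrable_const
          (by apply Continuous.intervalIntegrable; fun_prop),
        intervalIntegral.integral_const, int_lin D b r]
      simp [smul_eq_mul]
    rw [hlow] at hmono
    calc ψ a - (L:ℝ) * (r^2 * ‖b‖^2)
        = (2*Real.pi)⁻¹ * ((2*Real.pi) * (ψ a - (L:ℝ) * (r^2 * ‖b‖^2))) := by
          field_simp
      _ ≤ (2*Real.pi)⁻¹ * ∫ θ in (0:ℝ)..(2*Real.pi), ψ (p θ) := by
          apply mul_le_mul_of_nonneg_left hmono (by positivity)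
  -- Step 2 : lower bound for the ρ-integral
  have hstep2 : ρ a + r^2 * ‖b‖^2 ≤ (2*Real.pi)⁻¹ * ∫ θ in (0:ℝ)..(2*Real.pi), ρ (p θ) := by
    have hρ2 := hρsq.2 a b r hr hmem
    have hsplit : (∫ θ in (0:ℝ)..(2*Real.pi), ρ (p θ))
        = (∫ θ in (0:ℝ)..(2*Real.pi), (ρ (p θ) - ‖p θ‖^2))
          + ∫ θ in (0:ℝ)..(2*Real.pi), ‖p θ‖^2 := by
      rw [← intervalIntegral.integral_add (iρ.sub inorm) inorm]
      congr 1; funext θ; ring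
    have hnorm := int_norm a b r hr
    rw [hsplit, mul_add, hnorm]
    have h2 : (2*Real.pi)⁻¹ * (2 * Real.pi * (‖a‖^2 + r^2 * ‖b‖^2)) = ‖a‖^2 + r^2 * ‖b‖^2 := by
      field_simp
    rw [h2]
    have := hρ2
    simp only at this
    linarith
  -- Combine
  have hsplit : (∫ θ in (0:ℝ)..(2*Real.pi), (ψ (p θ) + K * ρ (p θ)))
      = (∫ θ in (0:ℝ)..(2*Real.pi), ψ (p θ)) + K * ∫ θ in (0:ℝ)..(2*Real.pi), ρ (p θ) := by
    rw [intervalIntegral.integral_add iψ (iρ.const_mul K), intervalIntegral.integral_const_mul]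
  show ψ a + K * ρ a ≤ (2*Real.pi)⁻¹ * ∫ θ in (0:ℝ)..(2*Real.pi), (ψ (p θ) + K * ρ (p θ))
  rw [hsplit, mul_add]
  have hKmul : K * (ρ a + r^2 * ‖b‖^2) ≤ K * ((2*Real.pi)⁻¹ * ∫ θ in (0:ℝ)..(2*Real.pi), ρ (p θ)) :=
    mul_le_mul_of_nonneg_left hstep2 hKpos.le
  have hrb : (0:ℝ) ≤ r^2 * ‖b‖^2 := by positivity
  have hLrb : (L:ℝ) * (r^2 * ‖b‖^2) ≤ K * (r^2 * ‖b‖^2) :=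
    mul_le_mul_of_nonneg_right hKL hrb
  have harr : (2*Real.pi)⁻¹ * (K * ∫ θ in (0:ℝ)..(2*Real.pi), ρ (p θ))
      = K * ((2*Real.pi)⁻¹ * ∫ θ in (0:ℝ)..(2*Real.pi), ρ (p θ)) := by ring
  rw [harr]
  nlinarith [hstep1, hKmul]
end
end

section
/- Let Ω ⊊ ℂ^n be a bounded domain such that for some ε ∈ (0,1] the Dirichlet problem for the homogeneous complex Monge–Ampère equation with boundary data φ(z) = −‖z‖² admits a solution u_φ that is plurisubharmonic on Ω, ε-Hölder continuous on cl(Ω), maximal (i.e., (dd^c u_φ)^n = 0), and equal to φ on ∂Ω. Then ρ(z) := u_φ(z) + ‖z‖² is plurisubharmonic on Ω, ε-Hölder continuous on cl(Ω), satisfies ρ = 0 on ∂Ω, ρ < 0 on Ω, and ρ(z) − ‖z‖² is plurisubharmonic on Ω. -/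
open scoped BigOperators

noncomputable section

section Helpers

open Complex MeasureTheory intervalIntegral

lemma circle_integral_norm_sq {E : Type*} [NormedAddCommGroup E] [InnerProductSpace ℂ E]
    (a b : E) (r : ℝ) (hr : 0 ≤ r) :
    ∫ θ in (0:ℝ)..(2*Real.pi), ‖a + ((r:ℂ) * Complex.exp (θ * Complex.I)) • b‖^2
      = 2*Real.pi*(‖a‖^2 + r^2*‖b‖^2) := by
  set k : ℂ := inner ℂ a b with hk
  have key : ∀ θ : ℝ, ‖a + ((r:ℂ) * Complex.exp (θ * Complex.I)) • b‖^2
      = (‖a‖^2 + r^2*‖b‖^2) + (2*r*k.re)*Real.cos θ + (-(2*r*k.im))*Real.sin θ := by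
    intro θ
    have h1 := norm_add_sq (𝕜 := ℂ) a (((r:ℂ) * Complex.exp (θ * Complex.I)) • b)
    rw [inner_smul_right] at h1
    have habs : ‖(r:ℂ) * Complex.exp (θ * Complex.I)‖ = r := by
      rw [norm_mul, Complex.norm_exp]
      simp [_root_.abs_of_nonneg hr]
    have hnorm : ‖((r:ℂ) * Complex.exp (θ * Complex.I)) • b‖ = r * ‖b‖ := by
      rw [norm_smul, habs]
    have hre : ((r:ℂ) * Complex.exp (θ * Complex.I) * k).re
        = r * (Real.cos θ * k.re - Real.sin θ * k.im) := by
      simp [Complex.mul_re, Complex.exp_ofReal_mul_I_re, Complex.exp_ofReal_mul_I_im]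
      ring
    rw [h1, hnorm]
    rw [RCLike.re_to_complex, hre]
    ring
  rw [intervalIntegral.integral_congr (g := fun θ : ℝ =>
      (‖a‖^2 + r^2*‖b‖^2) + (2*r*k.re)*Real.cos θ + (-(2*r*k.im))*Real.sin θ)
      (fun θ _ => key θ)]
  have hc : IntervalIntegrable (fun θ : ℝ => (2*r*k.re)*Real.cos θ) volume 0 (2*Real.pi) :=
    (continuous_const.mul Real.continuous_cos).intervalIntegrable _ _
  have hs : IntervalIntegrable (fun θ : ℝ => (-(2*r*k.im))*Real.sin θ) volume 0 (2*Real.pi) :=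
    (continuous_const.mul Real.continuous_sin).intervalIntegrable _ _
  rw [intervalIntegral.integral_add (intervalIntegrable_const.add hc) hs,
    intervalIntegral.integral_add intervalIntegrable_const hc,
    intervalIntegral.integral_const, intervalIntegral.integral_const_mul,
    intervalIntegral.integral_const_mul, integral_cos, integral_sin]
  simp [Real.sin_two_pi, Real.cos_two_pi]
  try ring

lemma abs_circle (r θ : ℝ) (hr : 0 ≤ r) :
    ‖(r:ℂ) * Complex.exp (θ * Complex.I)‖ = r := by
  rw [norm_mul, Complex.norm_exp]
  simp [_root_.abs_of_nonneg hr]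

lemma path_cont {E : Type*} [NormedAddCommGroup E] [NormedSpace ℂ E] (a b : E) (r : ℝ) :
    Continuous fun θ : ℝ => a + ((r:ℂ) * Complex.exp (θ * Complex.I)) • b :=
  continuous_const.add
    (((continuous_const.mul (Complex.continuous_exp.comp
      (Complex.continuous_ofReal.mul continuous_const)))).smul continuous_const)

lemma comp_cont {E : Type*} [NormedAddCommGroup E] [NormedSpace ℂ E]
    {Ω : Set E} {u : E → ℝ}
    (hucont : ContinuousOn u (closure Ω)) (a b : E) (r : ℝ) (hr : 0 ≤ r)
    (hmem : ∀ t : ℂ, ‖t‖ ≤ r → a + t • b ∈ Ω) :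
    Continuous fun θ : ℝ => u (a + ((r:ℂ) * Complex.exp (θ * Complex.I)) • b) :=
  hucont.comp_continuous (path_cont a b r)
    (fun θ => subset_closure (hmem _ (le_of_eq (abs_circle r θ hr))))

lemma psh_mul_add_normsq {n : ℕ} {Ω : Set (EuclideanSpace ℂ (Fin n))}
    {u : EuclideanSpace ℂ (Fin n) → ℝ}
    (hupsh : PSH Ω u) (hucont : ContinuousOn u (closure Ω)) (c : ℝ) (hc : 0 ≤ c) :
    PSH Ω (fun z => c * u z + ‖z‖^2) := by
  have hπ : (0:ℝ) < 2 * Real.pi := by positivity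
  constructor
  · exact ((continuousOn_const.mul (hucont.mono subset_closure)).add
      ((continuous_norm.pow 2).continuousOn)).upperSemicontinuousOn
  · intro a b r hr hmem
    have hcu : Continuous fun θ : ℝ =>
        u (a + ((r:ℂ) * Complex.exp (θ * Complex.I)) • b) :=
      comp_cont hucont a b r hr.le hmem
    have hintu : IntervalIntegrable
        (fun θ : ℝ => u (a + ((r:ℂ) * Complex.exp (θ * Complex.I)) • b))
        volume 0 (2*Real.pi) := hcu.intervalIntegrable _ _
    have hintn : IntervalIntegrable
        (fun θ : ℝ => ‖a + ((r:ℂ) * Complex.exp (θ * Complex.I)) • b‖^2)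
        volume 0 (2*Real.pi) :=
      (((path_cont a b r).norm).pow 2).intervalIntegrable _ _
    have h1 := hupsh.2 a b r hr hmem
    have hsplit : (2*Real.pi)⁻¹ * ∫ θ in (0:ℝ)..(2*Real.pi),
        (c * u (a + ((r:ℂ) * Complex.exp (θ * Complex.I)) • b)
          + ‖a + ((r:ℂ) * Complex.exp (θ * Complex.I)) • b‖^2)
        = c * ((2*Real.pi)⁻¹ * ∫ θ in (0:ℝ)..(2*Real.pi),
            u (a + ((r:ℂ) * Complex.exp (θ * Complex.I)) • b))
          + (‖a‖^2 + r^2*‖b‖^2) := by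
      rw [intervalIntegral.integral_add (hintu.const_mul c) hintn,
        intervalIntegral.integral_const_mul, circle_integral_norm_sq a b r hr.le]
      rw [mul_add, ← mul_assoc (2*Real.pi)⁻¹ (2*Real.pi), inv_mul_cancel₀ hπ.ne', one_mul]
      ring
    show c * u a + ‖a‖^2 ≤ (2*Real.pi)⁻¹ * ∫ θ in (0:ℝ)..(2*Real.pi),
        (c * u (a + ((r:ℂ) * Complex.exp (θ * Complex.I)) • b)
          + ‖a + ((r:ℂ) * Complex.exp (θ * Complex.I)) • b‖^2)
    rw [hsplit]
    have h2 : c * u a ≤ c * ((2*Real.pi)⁻¹ * ∫ θ in (0:ℝ)..(2*Real.pi),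
        u (a + ((r:ℂ) * Complex.exp (θ * Complex.I)) • b)) :=
      mul_le_mul_of_nonneg_left h1 hc
    have h3 : (0:ℝ) ≤ r^2*‖b‖^2 := by positivity
    linarith

end Helpers

/-- **Theorem 1.1, (b) ⇒ (a).** Suppose the Dirichlet problem for the homogeneous complex
Monge–Ampère equation on the bounded domain `Ω ⊊ ℂⁿ` with boundary data `φ(z) = -‖z‖²`
has a solution `u` that is plurisubharmonic on `Ω`, `ε`-Hölder on `cl Ω`, maximal, and
equal to `φ` on `∂Ω`. Then `ρ(z) := u z + ‖z‖²` is plurisubharmonic on `Ω`, `ε`-Hölder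
on `cl Ω`, vanishes on `∂Ω`, is negative on `Ω`, and `ρ(z) - ‖z‖²` is plurisubharmonic. -/
theorem defining_function_from_holder_solution {n : ℕ} (hn : 2 ≤ n)
    (Ω : Set (EuclideanSpace ℂ (Fin n)))
    (hΩopen : IsOpen Ω) (hΩconn : IsConnected Ω) (hΩbdd : Bornology.IsBounded Ω)
    (hΩproper : Ω ≠ Set.univ) (hΩne : Ω.Nonempty)
    (ε : ℝ) (hε : ε ∈ Set.Ioc (0 : ℝ) 1)
    (u : EuclideanSpace ℂ (Fin n) → ℝ)
    (hupsh : PSH Ω u) (hucont : ContinuousOn u (closure Ω))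
    (huholder : ∃ C > (0 : ℝ), ∀ x ∈ closure Ω, ∀ y ∈ closure Ω,
      |u x - u y| ≤ C * ‖x - y‖ ^ ε)
    (humax : ∀ v : EuclideanSpace ℂ (Fin n) → ℝ, PSH Ω v → ContinuousOn v (closure Ω) →
      (∀ ζ ∈ frontier Ω, v ζ ≤ u ζ) → ∀ z ∈ Ω, v z ≤ u z)
    (hubdry : ∀ ζ ∈ frontier Ω, u ζ = -‖ζ‖ ^ 2) :
    PSH Ω (fun z => u z + ‖z‖ ^ 2) ∧
      (∃ C > (0 : ℝ), ∀ x ∈ closure Ω, ∀ y ∈ closure Ω,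
        |(u x + ‖x‖ ^ 2) - (u y + ‖y‖ ^ 2)| ≤ C * ‖x - y‖ ^ ε) ∧
      (∀ ζ ∈ frontier Ω, u ζ + ‖ζ‖ ^ 2 = 0) ∧
      (∀ z ∈ Ω, u z + ‖z‖ ^ 2 < 0) ∧
      PSH Ω (fun z => (u z + ‖z‖ ^ 2) - ‖z‖ ^ 2) := by
  obtain ⟨hε0, hε1⟩ := hε
  have hπ : (0:ℝ) < 2 * Real.pi := by positivity
  have hρpsh : PSH Ω (fun z => u z + ‖z‖ ^ 2) := by
    have := psh_mul_add_normsq hupsh hucont 1 zero_le_one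
    simpa using this
  have hρcont : ContinuousOn (fun z => u z + ‖z‖^2) (closure Ω) :=
    hucont.add (continuous_norm.pow 2).continuousOn
  have hbd : ∀ ζ ∈ frontier Ω, u ζ + ‖ζ‖ ^ 2 = 0 := by
    intro ζ hζ; rw [hubdry ζ hζ]; ring
  have hρle : ∀ z ∈ Ω, u z + ‖z‖^2 ≤ 0 := by
    intro z hz
    have hv : PSH Ω (fun z => 2 * u z + ‖z‖^2) :=
      psh_mul_add_normsq hupsh hucont 2 (by norm_num)
    have hvc : ContinuousOn (fun z => 2 * u z + ‖z‖^2) (closure Ω) :=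
      (continuousOn_const.mul hucont).add (continuous_norm.pow 2).continuousOn
    have hvb : ∀ ζ ∈ frontier Ω, 2 * u ζ + ‖ζ‖^2 ≤ u ζ := by
      intro ζ hζ
      have h := hubdry ζ hζ
      nlinarith [h]
    have := humax _ hv hvc hvb z hz
    linarith
  have hhold : ∃ C > (0:ℝ), ∀ x ∈ closure Ω, ∀ y ∈ closure Ω,
      |(u x + ‖x‖^2) - (u y + ‖y‖^2)| ≤ C * ‖x - y‖ ^ ε := by
    obtain ⟨C, hC, hH⟩ := huholder
    obtain ⟨M, hM⟩ := (hΩbdd.closure).exists_norm_le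
    set M' : ℝ := max M 0 + 1 with hM'def
    have hM'pos : (0:ℝ) < M' := by positivity
    have hMle : ∀ x ∈ closure Ω, ‖x‖ ≤ M' := by
      intro x hx
      have := hM x hx
      have : M ≤ max M 0 := le_max_left M 0
      have := hM x hx
      simp only [hM'def]
      linarith [le_max_left M 0]
    refine ⟨C + 2*M' * (2*M')^(1-ε), by positivity, ?_⟩
    intro x hx y hy
    have h1 : |u x - u y| ≤ C * ‖x-y‖^ε := hH x hx y hy
    have h2 : |‖x‖^2 - ‖y‖^2| ≤ 2*M' * ‖x - y‖ := by
      have hfac : ‖x‖^2 - ‖y‖^2 = (‖x‖ - ‖y‖) * (‖x‖ + ‖y‖) := by ring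
      rw [hfac, abs_mul]
      have ha : |‖x‖ - ‖y‖| ≤ ‖x - y‖ := abs_norm_sub_norm_le x y
      have hb : |‖x‖ + ‖y‖| ≤ 2*M' := by
        rw [abs_of_nonneg (by positivity)]
        have := hMle x hx; have := hMle y hy; linarith
      calc |‖x‖-‖y‖| * |‖x‖+‖y‖| ≤ ‖x-y‖ * (2*M') :=
            mul_le_mul ha hb (abs_nonneg _) (norm_nonneg _)
        _ = 2*M' * ‖x-y‖ := by ring
    have h3 : ‖x - y‖ ≤ (2*M')^(1-ε) * ‖x-y‖^ε := by
      rcases eq_or_ne x y with h|h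
      · simp [h, Real.zero_rpow hε0.ne']
      · have ht : (0:ℝ) < ‖x - y‖ := by
          rw [norm_pos_iff]; exact sub_ne_zero.mpr h
        have htM : ‖x - y‖ ≤ 2*M' := by
          calc ‖x - y‖ ≤ ‖x‖ + ‖y‖ := norm_sub_le x y
            _ ≤ 2*M' := by have := hMle x hx; have := hMle y hy; linarith
        calc ‖x-y‖ = ‖x-y‖^((1:ℝ)-ε) * ‖x-y‖^ε := by
              rw [← Real.rpow_add ht]; norm_num
          _ ≤ (2*M')^((1:ℝ)-ε) * ‖x-y‖^ε :=
              mul_le_mul_of_nonneg_right (Real.rpow_le_rpow ht.le htM (by linarith))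
                (Real.rpow_nonneg (norm_nonneg _) _)
    calc |(u x + ‖x‖^2) - (u y + ‖y‖^2)| ≤ |u x - u y| + |‖x‖^2 - ‖y‖^2| := by
          have hsp : (u x + ‖x‖^2) - (u y + ‖y‖^2)
              = (u x - u y) + (‖x‖^2 - ‖y‖^2) := by ring
          rw [hsp]; exact abs_add_le _ _
      _ ≤ C * ‖x-y‖^ε + 2*M' * ((2*M')^(1-ε) * ‖x-y‖^ε) := by
          refine add_le_add h1 (le_trans h2 ?_)
          exact mul_le_mul_of_nonneg_left h3 (by positivity)
      _ = (C + 2*M' * (2*M')^(1-ε)) * ‖x-y‖^ε := by ring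
  have hneg : ∀ z ∈ Ω, u z + ‖z‖^2 < 0 := by
    intro z hz
    rcases lt_or_eq_of_le (hρle z hz) with h|h
    · exact h
    exfalso
    obtain ⟨ε', hε', hball⟩ := Metric.isOpen_iff.mp hΩopen z hz
    set δ : ℝ := ε'/2 with hδdef
    have hδpos : (0:ℝ) < δ := by positivity
    have hδlt : δ < ε' := by simp only [hδdef]; linarith
    have hmemball : ∀ w : EuclideanSpace ℂ (Fin n), ‖w‖ ≤ δ → z + w ∈ Ω := by
      intro w hw
      apply hball
      rw [Metric.mem_ball, dist_eq_norm]
      have hww : z + w - z = w := by abel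
      rw [hww]; linarith
    have claim : ∀ w : EuclideanSpace ℂ (Fin n), ‖w‖ ≤ δ →
        u (z + w) + ‖z + w‖^2 = 0 := by
      intro w hw
      have hmem : ∀ t : ℂ, ‖t‖ ≤ (1:ℝ) → z + t • w ∈ Ω := by
        intro t ht
        apply hmemball
        rw [norm_smul]
        calc ‖t‖ * ‖w‖ ≤ 1 * δ :=
              mul_le_mul ht hw (norm_nonneg _) zero_le_one
          _ = δ := one_mul δ
      have h1 := hρpsh.2 z w 1 one_pos hmem
      simp only at h1
      rw [h] at h1
      have hgc : Continuous fun θ : ℝ =>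
          u (z + (((1:ℝ):ℂ) * Complex.exp (θ*Complex.I)) • w)
            + ‖z + (((1:ℝ):ℂ) * Complex.exp (θ*Complex.I)) • w‖^2 :=
        (comp_cont hucont z w 1 zero_le_one hmem).add ((path_cont z w 1).norm.pow 2)
      have hint : 0 ≤ ∫ θ in (0:ℝ)..(2*Real.pi),
          (u (z + (((1:ℝ):ℂ) * Complex.exp (θ*Complex.I)) • w)
            + ‖z + (((1:ℝ):ℂ) * Complex.exp (θ*Complex.I)) • w‖^2) := by
        by_contra hcon
        push_neg at hcon
        have := mul_neg_of_pos_of_neg (inv_pos.mpr hπ) hcon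
        linarith
      have hle' : u (z + w) + ‖z + w‖^2 ≤ 0 := hρle _ (hmemball w hw)
      rcases lt_or_eq_of_le hle' with hlt|heq
      · exfalso
        have hmono := intervalIntegral.integral_lt_integral_of_continuousOn_of_le_of_exists_lt
          (f := fun θ : ℝ => u (z + (((1:ℝ):ℂ) * Complex.exp (θ*Complex.I)) • w)
            + ‖z + (((1:ℝ):ℂ) * Complex.exp (θ*Complex.I)) • w‖^2)
          (g := fun _ : ℝ => (0:ℝ)) hπ hgc.continuousOn continuousOn_const
          (by
            intro θ _
            refine hρle _ (hmemball _ ?_)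
            rw [norm_smul, abs_circle 1 θ zero_le_one, one_mul]
            exact hw)
          (by
            refine ⟨0, ⟨le_refl _, hπ.le⟩, ?_⟩
            simpa using hlt)
        rw [intervalIntegral.integral_const, smul_zero] at hmono
        linarith
      · linarith
    set b₀ : EuclideanSpace ℂ (Fin n) :=
      EuclideanSpace.single (⟨0, by omega⟩ : Fin n) (1:ℂ) with hb₀def
    have hb₀ : ‖b₀‖ = 1 := by
      rw [hb₀def, EuclideanSpace.norm_single]
      simp
    have hmem2 : ∀ t : ℂ, ‖t‖ ≤ δ → z + t • b₀ ∈ Ω := by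
      intro t ht
      apply hmemball
      rw [norm_smul, hb₀, mul_one]
      exact ht
    have h2 := hupsh.2 z b₀ δ hδpos hmem2
    have hfeq : Set.EqOn
        (fun θ : ℝ => u (z + ((δ:ℂ) * Complex.exp (θ*Complex.I)) • b₀))
        (fun θ : ℝ => -(‖z + ((δ:ℂ) * Complex.exp (θ*Complex.I)) • b₀‖^2))
        (Set.uIcc (0:ℝ) (2*Real.pi)) := by
      intro θ _
      have hwn : ‖((δ:ℂ) * Complex.exp (θ*Complex.I)) • b₀‖ ≤ δ := by
        rw [norm_smul, hb₀, mul_one, abs_circle δ θ hδpos.le]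
      have := claim _ hwn
      simp only
      linarith
    have hI : (∫ θ in (0:ℝ)..(2*Real.pi),
        u (z + ((δ:ℂ) * Complex.exp (θ*Complex.I)) • b₀))
        = -(2*Real.pi*(‖z‖^2 + δ^2*‖b₀‖^2)) := by
      rw [intervalIntegral.integral_congr hfeq, intervalIntegral.integral_neg,
        circle_integral_norm_sq z b₀ δ hδpos.le]
    rw [hI] at h2
    have hsimp : (2*Real.pi)⁻¹ * -(2*Real.pi*(‖z‖^2 + δ^2*‖b₀‖^2))
        = -(‖z‖^2 + δ^2*‖b₀‖^2) := by
      field_simp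
    rw [hsimp, hb₀] at h2
    nlinarith [h2, h, hδpos]
  refine ⟨hρpsh, hhold, hbd, hneg, ?_⟩
  have heq : (fun z : EuclideanSpace ℂ (Fin n) => (u z + ‖z‖^2) - ‖z‖^2) = u :=
    funext fun z => by ring
  rw [heq]
  exact hupsh
end
end
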